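/- Let G = ([n], E) be a DAG with weights w ∈ ℝ^E and weight matrix C. Then Q(C) = Q(C^♭), and (G^♭_w, w^♭) is the unique minimal such weighted DAG: for every DAG H with edge set contained in E* and every weights u on H with weight matrix C_u such that Q(C_u) = Q(C), one has G^♭_w ⊆ H and u agrees with w^♭ on the edges of G^♭_w; moreover, w^♭ is the unique weight vector u ∈ ℝ^{E^♭_w} on G^♭_w with Q(C_u) = Q(C^♭). -/

import Mathlib

open scoped Classical
noncomputable section

/-- The min-plus tropical semiring `T = ℝ ∪ {∞}` with `⊕ = min` and `⊙ = +`. -/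
abbrev Trop : Type := WithTop ℝ

/-- Min-plus identity matrix: `0` on the diagonal, `∞` off the diagonal. -/
def mpId {n : ℕ} : Matrix (Fin n) (Fin n) Trop := fun i j => if i = j then 0 else ⊤

/-- Min-plus matrix product. -/
def mpMul {n : ℕ} (A B : Matrix (Fin n) (Fin n) Trop) : Matrix (Fin n) (Fin n) Trop :=
  fun i j => Finset.univ.inf fun k => A i k + B k j

/-- Entrywise minimum (tropical sum) of matrices. -/
def mpAdd {n : ℕ} (A B : Matrix (Fin n) (Fin n) Trop) : Matrix (Fin n) (Fin n) Trop :=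
  fun i j => A i j ⊓ B i j

/-- Min-plus matrix power. -/
def mpPow {n : ℕ} (A : Matrix (Fin n) (Fin n) Trop) : ℕ → Matrix (Fin n) (Fin n) Trop
  | 0 => mpId
  | k + 1 => mpMul (mpPow A k) A

/-- Kleene star `A* = I ⊕ A ⊕ A^{⊙2} ⊕ ⋯ ⊕ A^{⊙(n−1)}`. -/
def kleene {n : ℕ} (A : Matrix (Fin n) (Fin n) Trop) : Matrix (Fin n) (Fin n) Trop :=
  fun i j => (Finset.range n).inf fun k => mpPow A k i j

/-- `p` is a directed path from `j` to `i` in the digraph with edge relation `E`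
(`E a b` meaning there is an edge `a → b`), recorded as its list of vertices. -/
def IsPathFrom {n : ℕ} (E : Fin n → Fin n → Prop) (j i : Fin n) (p : List (Fin n)) : Prop :=
  p.head? = some j ∧ p.getLast? = some i ∧ p.Chain' E

/-- A digraph is acyclic if the only paths from a vertex to itself are trivial. -/
def IsDAG {n : ℕ} (E : Fin n → Fin n → Prop) : Prop :=
  ∀ (j : Fin n) (p : List (Fin n)), IsPathFrom E j j p → p.length ≤ 1

/-- `C ∈ T^{n×n}` is supported on the digraph `E` : zero diagonal, and for `i ≠ j`
the entry `c_ij` is finite exactly when `j → i` is an edge. -/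
def SupportedOn {n : ℕ} (C : Matrix (Fin n) (Fin n) Trop) (E : Fin n → Fin n → Prop) : Prop :=
  (∀ i, C i i = 0) ∧ ∀ i j, i ≠ j → (C i j ≠ ⊤ ↔ E j i)

/-- The edge weight function of a weight matrix: `cw C a b = c_{ba}` is the weight of
the edge `a → b`. -/
def cw {n : ℕ} (C : Matrix (Fin n) (Fin n) Trop) : Fin n → Fin n → ℝ :=
  fun a b => WithTop.untopD 0 (C b a)

/-- Total weight of a path (sum of the weights of its consecutive edges). -/
def pathWeight {n : ℕ} (w : Fin n → Fin n → ℝ) (p : List (Fin n)) : ℝ :=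
  ((p.zip p.tail).map fun q => w q.1 q.2).sum

/-- The edge `j → i` belongs to the weighted transitive reduction `G^♭_w`:
the single edge is the unique minimum-weight directed path from `j` to `i`. -/
def InWTR {n : ℕ} (E : Fin n → Fin n → Prop) (w : Fin n → Fin n → ℝ) (j i : Fin n) : Prop :=
  E j i ∧ ∀ p : List (Fin n), IsPathFrom E j i p → p ≠ [j, i] → w j i < pathWeight w p

/-- Weighted digraph polyhedron `Q(C) = {x : x_i − x_j ≤ c_ij}` (as the saturated
subset of `ℝ^n` representing a subset of `ℝ^n/ℝ𝟙`). -/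
def wdp {n : ℕ} (C : Matrix (Fin n) (Fin n) Trop) : Set (Fin n → ℝ) :=
  {x | ∀ i j, i ≠ j → ((x i - x j : ℝ) : Trop) ≤ C i j}

/-- The tropical polyhedron generated by the columns of `V`: all min-plus linear
combinations `V ⊙ λ`, `λ ∈ ℝ^n` (as a saturated subset of `ℝ^d`). -/
def tconvM {d n : ℕ} (V : Matrix (Fin d) (Fin n) Trop) : Set (Fin d → ℝ) :=
  {x | ∃ lam : Fin n → ℝ, ∀ i, (x i : Trop) = Finset.univ.inf fun j => V i j + (lam j : Trop)}

/-- `v` is reachable from `s`. -/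
def Reaches {n : ℕ} (E : Fin n → Fin n → Prop) (s v : Fin n) : Prop :=
  ∃ p, IsPathFrom E s v p

/-- Edges of the transitive closure `G*`: `j → i` with `i ≠ j` reachable from `j`. -/
def EStar {n : ℕ} (E : Fin n → Fin n → Prop) (j i : Fin n) : Prop :=
  j ≠ i ∧ ∃ p, IsPathFrom E j i p

/-- The weight matrix `C^♭` of the weighted transitive reduction `(G^♭_w, w^♭)`. -/
def CflatM {n : ℕ} (E : Fin n → Fin n → Prop) (C : Matrix (Fin n) (Fin n) Trop) :
    Matrix (Fin n) (Fin n) Trop :=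
  fun a b => if a = b then 0 else if InWTR E (cw C) b a then C a b else ⊤

section Lemmas
variable {n : ℕ} {E : Fin n → Fin n → Prop}

lemma path_ne_nil {j i : Fin n} {p : List (Fin n)} (h : IsPathFrom E j i p) : p ≠ [] := by
  intro hn; rw [hn] at h; simp [IsPathFrom] at h

lemma path_single (v : Fin n) : IsPathFrom E v v [v] := by
  simp [IsPathFrom, List.Chain']

lemma path_snoc {s a b : Fin n} {p : List (Fin n)} (h : IsPathFrom E s a p) (hab : E a b) :
    IsPathFrom E s b (p ++ [b]) := by
  obtain ⟨h1, h2, h3⟩ := h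
  refine ⟨?_, ?_, ?_⟩
  · rw [List.head?_append_of_ne_nil _ (path_ne_nil ⟨h1, h2, h3⟩)]; exact h1
  · simp
  · rw [List.Chain', List.isChain_append]
    refine ⟨h3, List.isChain_singleton _, ?_⟩
    intro x hx y hy
    simp at hy
    rw [h2] at hx; simp at hx; subst hx; subst hy; exact hab

lemma no_self_loop (hdag : IsDAG E) (a : Fin n) : ¬ E a a := by
  intro h
  have := hdag a [a, a] ⟨rfl, rfl, by simp [List.Chain', h]⟩
  simp at this

lemma edge_ne (hdag : IsDAG E) {a b : Fin n} (h : E a b) : a ≠ b := by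
  rintro rfl; exact no_self_loop hdag a h

lemma reaches_refl (v : Fin n) : Reaches E v v := ⟨[v], path_single v⟩

lemma reaches_snoc {u a b : Fin n} (h : Reaches E u a) (hab : E a b) : Reaches E u b :=
  ⟨h.choose ++ [b], path_snoc h.choose_spec hab⟩

lemma not_reaches_back (hdag : IsDAG E) {a b : Fin n} (hab : E a b) (h : Reaches E b a) :
    False := by
  obtain ⟨p, hp⟩ := h
  have hba : b ≠ a := fun he => no_self_loop hdag a (he ▸ hab)
  have := hdag b (p ++ [b]) (path_snoc hp hab)
  rw [List.length_append] at this
  have hlen : 2 ≤ p.length := by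
    rcases p with _ | ⟨x, _ | ⟨y, t⟩⟩
    · exact absurd rfl (path_ne_nil hp)
    · obtain ⟨h1, h2, _⟩ := hp
      simp at h1 h2; exact absurd (h2.symm.trans h1).symm hba
    · simp
  omega

end Lemmas
section Lemmas2
variable {n : ℕ} {E : Fin n → Fin n → Prop}

/-- Topological rank: number of vertices strictly reaching `v`. -/
def rnk (E : Fin n → Fin n → Prop) (v : Fin n) : ℕ :=
  (Finset.univ.filter (fun u => Reaches E u v ∧ u ≠ v)).card

lemma rnk_le (v : Fin n) : rnk E v ≤ n := by
  calc (Finset.univ.filter (fun u => Reaches E u v ∧ u ≠ v)).card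
      ≤ Finset.univ.card := Finset.card_filter_le _ _
    _ = n := by simp

lemma rnk_lt (hdag : IsDAG E) {a b : Fin n} (hab : E a b) : rnk E a < rnk E b := by
  apply Finset.card_lt_card
  constructor
  · intro u hu
    simp only [Finset.mem_filter, Finset.mem_univ, true_and] at hu ⊢
    obtain ⟨hr, hne⟩ := hu
    refine ⟨reaches_snoc hr hab, ?_⟩
    rintro rfl
    exact not_reaches_back hdag hab hr
  · intro hsub
    have : a ∈ Finset.univ.filter (fun u => Reaches E u b ∧ u ≠ b) := by
      simp only [Finset.mem_filter, Finset.mem_univ, true_and]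
      exact ⟨⟨[a, b], rfl, rfl, by simp [List.Chain', hab]⟩, edge_ne hdag hab⟩
    have := hsub this
    simp only [Finset.mem_filter, Finset.mem_univ, true_and] at this
    exact this.2 rfl

lemma chain_rnk_le (hdag : IsDAG E) :
    ∀ (p : List (Fin n)) {s t : Fin n}, List.Chain' E p → p.head? = some s →
      p.getLast? = some t → rnk E s ≤ rnk E t := by
  intro p
  induction p with
  | nil => intro s t _ h; simp at h
  | cons x q ih =>
    intro s t hc h1 h2
    simp at h1; subst h1
    rcases q with _ | ⟨y, q'⟩
    · simp at h2; subst h2; exact le_rfl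
    · have hxy : E x y := (List.isChain_cons_cons.mp hc).1
      have := ih (s := y) (t := t) (List.isChain_cons_cons.mp hc).2 rfl (by simpa using h2)
      exact le_of_lt (lt_of_lt_of_le (rnk_lt hdag hxy) this)

lemma chain_rnk_lt (hdag : IsDAG E) {s t : Fin n} {p : List (Fin n)}
    (hc : List.Chain' E p) (h1 : p.head? = some s) (h2 : p.getLast? = some t)
    (hlen : 2 ≤ p.length) : rnk E s < rnk E t := by
  rcases p with _ | ⟨x, _ | ⟨y, q⟩⟩
  · simp at h1
  · simp at hlen
  · simp at h1; subst h1
    have hxy : E x y := (List.isChain_cons_cons.mp hc).1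
    have := chain_rnk_le hdag (y :: q) (List.isChain_cons_cons.mp hc).2 rfl (by simpa using h2)
    exact lt_of_lt_of_le (rnk_lt hdag hxy) this

lemma mem_zip_tail {p : List (Fin n)} {u v : Fin n} (h : (u, v) ∈ p.zip p.tail) :
    ∃ l₁ l₂, p = l₁ ++ u :: v :: l₂ := by
  induction p with
  | nil => simp at h
  | cons x q ih =>
    rcases q with _ | ⟨y, q'⟩
    · simp at h
    · simp only [List.tail_cons, List.zip_cons_cons, List.mem_cons] at h
      rcases h with h | h
      · obtain ⟨rfl, rfl⟩ := Prod.mk.injEq _ _ _ _ ▸ h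
        exact ⟨[], q', by simp⟩
      · obtain ⟨l₁, l₂, hl⟩ := ih h
        exact ⟨x :: l₁, l₂, by simp [hl]⟩

lemma zip_tail_edge {p : List (Fin n)} (hc : List.Chain' E p) {u v : Fin n}
    (h : (u, v) ∈ p.zip p.tail) : E u v := by
  obtain ⟨l₁, l₂, rfl⟩ := mem_zip_tail h
  have : List.Chain' E (u :: v :: l₂) := hc.suffix ⟨l₁, rfl⟩
  exact (List.isChain_cons_cons.mp this).1

end Lemmas2
section Lemmas3
variable {n : ℕ} {E : Fin n → Fin n → Prop}

lemma pathWeight_single (w : Fin n → Fin n → ℝ) (a : Fin n) : pathWeight w [a] = 0 := by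
  simp [pathWeight]

lemma pathWeight_cons₂ (w : Fin n → Fin n → ℝ) (a b : Fin n) (t : List (Fin n)) :
    pathWeight w (a :: b :: t) = w a b + pathWeight w (b :: t) := by
  simp [pathWeight]

lemma coe_cw {C : Matrix (Fin n) (Fin n) Trop} {i j : Fin n} (h : C i j ≠ ⊤) :
    C i j = ((cw C j i : ℝ) : Trop) := by
  obtain ⟨c, hc⟩ := WithTop.ne_top_iff_exists.mp h
  rw [← hc]
  simp only [cw, ← hc, WithTop.untopD_coe]

/-- Telescoping: if each consecutive edge inequality holds, the path inequality holds. -/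
lemma telescope (w : Fin n → Fin n → ℝ) (x : Fin n → ℝ) :
    ∀ (p : List (Fin n)) {a b : Fin n}, p.head? = some a → p.getLast? = some b →
      (∀ q ∈ p.zip p.tail, x q.2 - x q.1 ≤ w q.1 q.2) → x b - x a ≤ pathWeight w p := by
  intro p
  induction p with
  | nil => intro a b h; simp at h
  | cons u q ih =>
    intro a b h1 h2 hq
    simp at h1; subst h1
    rcases q with _ | ⟨v, q'⟩
    · simp at h2; subst h2; simp [pathWeight_single]
    · have hedge : x v - x u ≤ w u v := hq (u, v) (by simp)
      have hrest : x b - x v ≤ pathWeight w (v :: q') := by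
        apply ih rfl (by simpa using h2)
        intro q hqq
        exact hq q (by simp only [List.tail_cons, List.zip_cons_cons, List.mem_cons]; right; exact hqq)
      rw [pathWeight_cons₂]
      linarith

/-- Key lemma: any point of `Q(C^♭)` satisfies all single-edge inequalities of `C`. -/
lemma edge_bound {C : Matrix (Fin n) (Fin n) Trop} (hdag : IsDAG E)
    (hsupp : SupportedOn C E) {x : Fin n → ℝ} (hx : x ∈ wdp (CflatM E C)) :
    ∀ (m : ℕ) (a b : Fin n), E a b → rnk E b ≤ rnk E a + m → x b - x a ≤ cw C a b := by
  intro m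
  induction m using Nat.strong_induction_on with
  | _ m ih =>
  intro a b hab hm
  by_cases hw : InWTR E (cw C) a b
  · have hne : b ≠ a := (edge_ne hdag hab).symm
    have h1 := hx b a hne
    have hC : CflatM E C b a = ((cw C a b : ℝ) : Trop) := by
      have hfin : C b a ≠ ⊤ := (hsupp.2 b a hne).mpr hab
      rw [CflatM]; simp only [if_neg hne, if_pos hw]
      exact coe_cw hfin
    rw [hC] at h1
    exact_mod_cast h1
  · -- not in WTR: there is another path of weight ≤ w a b
    rw [InWTR, not_and] at hw
    push_neg at hw
    obtain ⟨p, hp, hpne, hple⟩ := hw hab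
    -- m must be positive
    rcases m with _ | m'
    · exact absurd hm (by have := rnk_lt hdag hab; omega)
    have hlen3 : 3 ≤ p.length := by
      rcases p with _ | ⟨u, _ | ⟨v, _ | ⟨z, t⟩⟩⟩
      · exact absurd rfl (path_ne_nil hp)
      · obtain ⟨h1, h2, _⟩ := hp
        simp at h1 h2
        exact absurd (h1.symm.trans h2) (edge_ne hdag hab)
      · obtain ⟨h1, h2, _⟩ := hp
        simp at h1 h2
        exact absurd (by rw [h1, h2]) hpne
      · simp
    obtain ⟨h1, h2, hc⟩ := hp
    have hstep : ∀ q ∈ p.zip p.tail, x q.2 - x q.1 ≤ cw C q.1 q.2 := by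
      rintro ⟨u, v⟩ hq
      have huv : E u v := zip_tail_edge hc hq
      obtain ⟨l₁, l₂, hpeq⟩ := mem_zip_tail hq
      -- rnk bounds
      have hau : rnk E a ≤ rnk E u := by
        apply chain_rnk_le hdag (l₁ ++ [u]) (hc.prefix ⟨v :: l₂, by simp [hpeq]⟩)
        · rw [← h1, hpeq]
          rcases l₁ with _ | ⟨z, t⟩ <;> simp
        · simp
      have hvb : rnk E v ≤ rnk E b := by
        apply chain_rnk_le hdag (v :: l₂) (hc.suffix ⟨l₁ ++ [u], by simp [hpeq]⟩) rfl
        rw [← h2, hpeq, List.getLast?_append_of_ne_nil _ (by simp : u :: v :: l₂ ≠ []),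
          List.getLast?_cons_cons]
      have hkey : rnk E v ≤ rnk E u + m' := by
        rcases l₁ with _ | ⟨z, t⟩
        · -- u = a; then l₂ ≠ [] (since length ≥ 3), so v is not last
          simp at hpeq
          have hu : u = a := by rw [hpeq] at h1; simpa using h1
          subst hu
          rcases l₂ with _ | ⟨z', t'⟩
          · rw [hpeq] at hlen3; simp at hlen3
          · have : rnk E v < rnk E b := by
              apply chain_rnk_lt hdag (p := v :: z' :: t')
                (hc.suffix ⟨[u], by simp [hpeq]⟩) rfl
              · rw [← h2, hpeq]; simp
              · simp
            omega
        · -- l₁ ≠ []: a is strictly before u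
          have : rnk E a < rnk E u := by
            apply chain_rnk_lt hdag (p := z :: t ++ [u])
              (hc.prefix ⟨v :: l₂, by simp [hpeq]⟩)
            · rw [← h1, hpeq]; simp
            · show ((z :: t) ++ [u]).getLast? = some u
              rw [List.getLast?_append_of_ne_nil _ (by simp)]; rfl
            · simp
          omega
      exact ih m' (Nat.lt_succ_self m') u v huv hkey
    have := telescope (cw C) x p h1 h2 hstep
    linarith

theorem part1 {C : Matrix (Fin n) (Fin n) Trop} (hdag : IsDAG E)
    (hsupp : SupportedOn C E) : wdp C = wdp (CflatM E C) := by
  ext x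
  constructor
  · intro hx i j hij
    rw [CflatM]; simp only [if_neg hij]
    by_cases hw : InWTR E (cw C) j i
    · simpa [if_pos hw] using hx i j hij
    · simp [if_neg hw]
  · intro hx i j hij
    by_cases hfin : C i j = ⊤
    · simp [hfin]
    · have hE : E j i := (hsupp.2 i j hij).mp hfin
      rw [coe_cw hfin, WithTop.coe_le_coe]
      apply edge_bound hdag hsupp hx n j i hE
      have := rnk_le (E := E) i; omega

end Lemmas3
section Lemmas4
variable {n : ℕ} {E : Fin n → Fin n → Prop}

lemma path_nodup (hdag : IsDAG E) {p : List (Fin n)} (hc : List.Chain' E p) : p.Nodup := by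
  have hr : List.Chain' (fun u v : Fin n => rnk E u < rnk E v) p := by
    induction p with
    | nil => simp [List.Chain']
    | cons x q ih =>
      rcases q with _ | ⟨y, q'⟩
      · simp [List.Chain']
      · simp only [List.Chain', List.isChain_cons_cons] at hc ⊢
        exact ⟨rnk_lt hdag hc.1, ih hc.2⟩
  haveI : IsTrans (Fin n) (fun u v : Fin n => rnk E u < rnk E v) := ⟨fun _ _ _ => lt_trans⟩
  have : List.Pairwise (fun u v : Fin n => rnk E u < rnk E v) p := by
    rw [← List.isChain_iff_pairwise]; exact hr
  exact this.imp fun h => by rintro rfl; exact lt_irrefl _ h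

lemma path_length_le (hdag : IsDAG E) {s v : Fin n} {p : List (Fin n)}
    (hp : IsPathFrom E s v p) : p.length ≤ n := by
  have := (path_nodup hdag hp.2.2).length_le_card
  simpa using this

lemma list_abs_sum_le (W : ℝ) (hW0 : 0 ≤ W) :
    ∀ l : List ℝ, (∀ x ∈ l, |x| ≤ W) → |l.sum| ≤ l.length * W := by
  intro l
  induction l with
  | nil => simp
  | cons a l ih =>
    intro h
    have ha := h a (by simp)
    have hl := ih fun x hx => h x (List.mem_cons_of_mem _ hx)
    simp only [List.sum_cons, List.length_cons]
    have := abs_add_le a l.sum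
    push_cast
    nlinarith [abs_nonneg l.sum, abs_nonneg a]

lemma pathWeight_abs_le (w : Fin n → Fin n → ℝ) {W : ℝ} (hW : ∀ a b, |w a b| ≤ W)
    (hW0 : 0 ≤ W) {p : List (Fin n)} (hlen : p.length ≤ n) :
    |pathWeight w p| ≤ n * W := by
  have hlen' : (p.zip p.tail).length ≤ n := by
    rw [List.length_zip]; omega
  have h1 : ∀ x ∈ (p.zip p.tail).map fun q => w q.1 q.2, |x| ≤ W := by
    intro x hx
    simp only [List.mem_map] at hx
    obtain ⟨q, _, rfl⟩ := hx
    exact hW q.1 q.2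
  have h2 : |pathWeight w p| ≤ ((p.zip p.tail).map fun q => w q.1 q.2).length * W :=
    list_abs_sum_le W hW0 _ h1
  calc |pathWeight w p| ≤ ((p.zip p.tail).map fun q => w q.1 q.2).length * W := h2
    _ ≤ n * W := by
        apply mul_le_mul_of_nonneg_right _ hW0
        rw [List.length_map]; exact_mod_cast hlen'

lemma pathWeight_snoc (w : Fin n → Fin n → ℝ) :
    ∀ (p : List (Fin n)) (a b : Fin n), p.getLast? = some a →
      pathWeight w (p ++ [b]) = pathWeight w p + w a b := by
  intro p
  induction p with
  | nil => intro a b h; simp at h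
  | cons u q ih =>
    intro a b h
    rcases q with _ | ⟨v, q'⟩
    · simp at h; subst h
      simp [pathWeight]
    · rw [List.getLast?_cons_cons] at h
      show pathWeight w (u :: v :: (q' ++ [b])) = pathWeight w (u :: v :: q') + w a b
      rw [pathWeight_cons₂, pathWeight_cons₂]
      have := ih a b h
      simp only [List.cons_append] at this
      rw [this]; ring

lemma path_concat (w : Fin n → Fin n → ℝ) :
    ∀ (qt : List (Fin n)) (m t : Fin n) (p : List (Fin n)) (s : Fin n),
      IsPathFrom E s m p → IsPathFrom E m t (m :: qt) →
      IsPathFrom E s t (p ++ qt) ∧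
        pathWeight w (p ++ qt) = pathWeight w p + pathWeight w (m :: qt) := by
  intro qt
  induction qt with
  | nil =>
    intro m t p s hp hq
    have : m = t := by have := hq.2.1; simpa using this
    subst this
    simp [hp, pathWeight_single]
  | cons v qt' ih =>
    intro m t p s hp hq
    obtain ⟨hq1, hq2, hq3⟩ := hq
    have hmv : E m v := (List.isChain_cons_cons.mp hq3).1
    have hq' : IsPathFrom E v t (v :: qt') := ⟨rfl, by simpa using hq2, (List.isChain_cons_cons.mp hq3).2⟩
    have hp' : IsPathFrom E s v (p ++ [v]) := path_snoc hp hmv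
    have := ih v t (p ++ [v]) s hp' hq'
    rw [List.append_assoc] at this
    simp only [List.singleton_append] at this
    refine ⟨this.1, ?_⟩
    rw [this.2, pathWeight_snoc w p m v hp.2.1, pathWeight_cons₂]
    ring

lemma paths_finite (s v : Fin n) (hdag : IsDAG E) : {p | IsPathFrom E s v p}.Finite :=
  (List.finite_length_le (Fin n) n).subset fun _ hp => path_length_le hdag hp

/-- Minimum path weight. -/
def dd (E : Fin n → Fin n → Prop) (w : Fin n → Fin n → ℝ) (s v : Fin n) : ℝ :=
  sInf (pathWeight w '' {p | IsPathFrom E s v p})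

lemma dd_le (hdag : IsDAG E) (w : Fin n → Fin n → ℝ) {s v : Fin n} {p : List (Fin n)}
    (hp : IsPathFrom E s v p) : dd E w s v ≤ pathWeight w p :=
  csInf_le ((paths_finite s v hdag).image _).bddBelow ⟨p, hp, rfl⟩

lemma dd_attained (hdag : IsDAG E) (w : Fin n → Fin n → ℝ) {s v : Fin n}
    (h : Reaches E s v) : ∃ p, IsPathFrom E s v p ∧ pathWeight w p = dd E w s v := by
  obtain ⟨p₀, hp₀⟩ := h
  have hne : (pathWeight w '' {p | IsPathFrom E s v p}).Nonempty := ⟨_, ⟨p₀, hp₀, rfl⟩⟩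
  have := hne.csInf_mem ((paths_finite s v hdag).image _)
  obtain ⟨p, hp, hpw⟩ := this
  exact ⟨p, hp, hpw⟩

lemma dd_self (hdag : IsDAG E) (w : Fin n → Fin n → ℝ) (s : Fin n) : dd E w s s = 0 := by
  have h1 : dd E w s s ≤ 0 := by
    have := dd_le hdag w (path_single (E := E) s)
    simpa [pathWeight_single] using this
  obtain ⟨p, hp, hpw⟩ := dd_attained hdag w (reaches_refl (E := E) s)
  have hp1 : p = [s] := by
    have hl := hdag s p hp
    rcases p with _ | ⟨x, _ | ⟨y, t⟩⟩
    · exact absurd rfl (path_ne_nil hp)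
    · have := hp.1; simp at this; rw [this]
    · simp at hl
  rw [hp1, pathWeight_single] at hpw
  linarith

lemma dd_triangle_edge (hdag : IsDAG E) (w : Fin n → Fin n → ℝ) {s a b : Fin n}
    (h : Reaches E s a) (hab : E a b) : dd E w s b ≤ dd E w s a + w a b := by
  obtain ⟨p, hp, hpw⟩ := dd_attained hdag w h
  have := dd_le hdag w (path_snoc hp hab)
  rw [pathWeight_snoc w p a b hp.2.1, hpw] at this
  exact this

lemma dd_abs_le (hdag : IsDAG E) (w : Fin n → Fin n → ℝ) {W : ℝ}
    (hW : ∀ a b, |w a b| ≤ W) (hW0 : 0 ≤ W) {s v : Fin n} (h : Reaches E s v) :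
    |dd E w s v| ≤ n * W := by
  obtain ⟨p, hp, hpw⟩ := dd_attained hdag w h
  rw [← hpw]
  exact pathWeight_abs_le w hW hW0 (path_length_le hdag hp)

end Lemmas4
section Lemmas5
variable {n : ℕ} {E : Fin n → Fin n → Prop} {C : Matrix (Fin n) (Fin n) Trop}

lemma dd_wtr (hdag : IsDAG E) {j i : Fin n} (hwtr : InWTR E (cw C) j i) :
    dd E (cw C) j i = cw C j i := by
  have hpath : IsPathFrom E j i [j, i] := ⟨rfl, rfl, by simp [List.Chain', hwtr.1]⟩
  have hle : dd E (cw C) j i ≤ cw C j i := by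
    have := dd_le hdag (cw C) hpath
    simpa [pathWeight] using this
  obtain ⟨p, hp, hpw⟩ := dd_attained hdag (cw C) ⟨[j, i], hpath⟩
  by_cases hpe : p = [j, i]
  · rw [hpe] at hpw; simp [pathWeight] at hpw
    linarith
  · have := hwtr.2 p hp hpe
    linarith

/-- The distance-based witness point lies in `Q(C)`. -/
lemma ypt_mem (hdag : IsDAG E) (hsupp : SupportedOn C E) {W M : ℝ}
    (hW : ∀ a b, |cw C a b| ≤ W) (hW0 : 0 ≤ W) (hM : n * W + n * W + W ≤ M) (s : Fin n) :
    (fun v => if Reaches E s v then dd E (cw C) s v else M - W * rnk E v) ∈ wdp C := by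
  intro i j hij
  by_cases hfin : C i j = ⊤
  · simp [hfin]
  have hE : E j i := (hsupp.2 i j hij).mp hfin
  rw [coe_cw hfin, WithTop.coe_le_coe]
  have hwja : -W ≤ cw C j i := by have := hW j i; rw [abs_le] at this; exact this.1
  by_cases hrj : Reaches E s j
  · have hri : Reaches E s i := reaches_snoc hrj hE
    simp only [if_pos hrj, if_pos hri]
    have := dd_triangle_edge hdag (cw C) hrj hE
    linarith
  · by_cases hri : Reaches E s i
    · simp only [if_pos hri, if_neg hrj]
      have h1 : dd E (cw C) s i ≤ n * W := by
        have := dd_abs_le hdag (cw C) hW hW0 hri; rw [abs_le] at this; exact this.2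
      have h2 : (rnk E j : ℝ) ≤ n := by exact_mod_cast rnk_le (E := E) j
      nlinarith
    · simp only [if_neg hri, if_neg hrj]
      have h1 : rnk E j < rnk E i := rnk_lt hdag hE
      have h2 : (rnk E j : ℝ) + 1 ≤ rnk E i := by exact_mod_cast h1
      nlinarith

end Lemmas5
section Lemmas6
variable {n : ℕ} {E : Fin n → Fin n → Prop} {C : Matrix (Fin n) (Fin n) Trop}

lemma part2 (hdag : IsDAG E) (hsupp : SupportedOn C E)
    (EH : Fin n → Fin n → Prop) (Cu : Matrix (Fin n) (Fin n) Trop)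
    (hEH : ∀ a b, EH a b → EStar E a b) (hsuppu : SupportedOn Cu EH)
    (hQ : wdp Cu = wdp C) {j i : Fin n} (hwtr : InWTR E (cw C) j i) :
    EH j i ∧ Cu i j = C i j := by
  classical
  have hji : E j i := hwtr.1
  have hjine : j ≠ i := edge_ne hdag hji
  have hCfin : C i j ≠ ⊤ := (hsupp.2 i j (Ne.symm hjine)).mpr hji
  -- bounds
  set W : ℝ := ∑ a : Fin n, ∑ b : Fin n, |cw C a b| with hWdef
  have hW : ∀ a b : Fin n, |cw C a b| ≤ W := by
    intro a b
    calc |cw C a b| ≤ ∑ b' : Fin n, |cw C a b'| :=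
          Finset.single_le_sum (f := fun b' => |cw C a b'|)
            (fun _ _ => abs_nonneg _) (Finset.mem_univ b)
      _ ≤ W := Finset.single_le_sum (f := fun a' => ∑ b' : Fin n, |cw C a' b'|)
          (fun _ _ => Finset.sum_nonneg fun _ _ => abs_nonneg _) (Finset.mem_univ a)
  have hW0 : 0 ≤ W := le_trans (abs_nonneg _) (hW j i)
  set M : ℝ := n * W + n * W + W + 1 with hMdef
  have hM : n * W + n * W + W ≤ M := by rw [hMdef]; linarith
  -- the witness point
  set x : Fin n → ℝ :=
    fun v => if Reaches E j v then dd E (cw C) j v else M - W * rnk E v with hxdef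
  have hxC : x ∈ wdp C := ypt_mem hdag hsupp hW hW0 hM j
  have hxCu : x ∈ wdp Cu := by rw [hQ]; exact hxC
  have hxj : x j = 0 := by
    rw [hxdef]; simp only [if_pos (reaches_refl (E := E) j)]; exact dd_self hdag (cw C) j
  have hrji : Reaches E j i := ⟨[j, i], rfl, rfl, by simp [List.Chain', hji]⟩
  have hxi : x i = cw C j i := by
    rw [hxdef]; simp only [if_pos hrji]; exact dd_wtr hdag hwtr
  -- epsilon
  set F : Finset (Fin n) :=
    Finset.univ.filter (fun b => i ≠ b ∧ Cu i b ≠ ⊤ ∧ ((x i - x b : ℝ) : Trop) < Cu i b)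
    with hFdef
  set gap : Fin n → ℝ := fun b => WithTop.untopD 0 (Cu i b) - (x i - x b) with hgapdef
  set ε : ℝ := if h : F.Nonempty then min 1 (F.inf' h gap) else 1 with hεdef
  have hgappos : ∀ b ∈ F, 0 < gap b := by
    intro b hb
    rw [hFdef] at hb
    simp only [Finset.mem_filter, Finset.mem_univ, true_and] at hb
    obtain ⟨hib, hfin, hlt⟩ := hb
    obtain ⟨c, hc⟩ := WithTop.ne_top_iff_exists.mp hfin
    rw [← hc, WithTop.coe_lt_coe] at hlt
    rw [hgapdef]
    simp only [← hc, WithTop.untopD_coe]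
    linarith
  have hεpos : 0 < ε := by
    rw [hεdef]
    split_ifs with h
    · exact lt_min one_pos ((Finset.lt_inf'_iff h).mpr fun b hb => hgappos b hb)
    · exact one_pos
  have hεle : ∀ b ∈ F, ε ≤ gap b := by
    intro b hb
    rw [hεdef]
    rw [dif_pos ⟨b, hb⟩]
    exact le_trans (min_le_right _ _) (Finset.inf'_le gap hb)
  -- perturbed point violates Q(C)
  set x' : Fin n → ℝ := fun v => if v = i then x i + ε else x v with hx'def
  have hx'C : x' ∉ wdp C := by
    intro hmem
    have := hmem i j (Ne.symm hjine)
    rw [coe_cw hCfin] at this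
    have hx'i : x' i = x i + ε := by simp [hx'def]
    have hx'j : x' j = x j := by simp [hx'def, hjine]
    rw [hx'i, hx'j, WithTop.coe_le_coe, hxi, hxj] at this
    linarith
  have hx'Cu : x' ∉ wdp Cu := by rw [hQ]; exact hx'C
  rw [wdp, Set.mem_setOf_eq] at hx'Cu
  push_neg at hx'Cu
  obtain ⟨a, b, hab, hviol⟩ := hx'Cu
  -- the violated constraint must have a = i
  have ha : a = i := by
    by_contra hai
    have hx'a : x' a = x a := by simp only [hx'def]; rw [if_neg hai]
    have hx'b : x b ≤ x' b := by
      simp only [hx'def]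
      split_ifs with h
      · rw [h]; linarith
      · exact le_rfl
    have hle2 : ((x' a - x' b : ℝ) : Trop) ≤ Cu a b :=
      calc ((x' a - x' b : ℝ) : Trop) ≤ ((x a - x b : ℝ) : Trop) := by
            rw [WithTop.coe_le_coe, hx'a]; linarith
        _ ≤ Cu a b := hxCu a b hab
    exact absurd hviol (not_lt.mpr hle2)
  rw [ha] at hviol hab
  have hbi : i ≠ b := hab
  have hx'b : x' b = x b := by simp only [hx'def]; rw [if_neg (Ne.symm hbi)]
  have hx'i : x' i = x i + ε := by simp [hx'def]
  rw [hx'i, hx'b] at hviol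
  have hfinb : Cu i b ≠ ⊤ := (lt_of_lt_of_le hviol le_top).ne
  have hlow : ((x i - x b : ℝ) : Trop) ≤ Cu i b := hxCu i b hbi
  -- Cu i b equals x i - x b
  have hCub : Cu i b = ((x i - x b : ℝ) : Trop) := by
    by_contra hne
    have hmemF : b ∈ F := by
      rw [hFdef]
      simp only [Finset.mem_filter, Finset.mem_univ, true_and]
      exact ⟨hbi, hfinb, lt_of_le_of_ne hlow (Ne.symm hne)⟩
    have h1 := hεle b hmemF
    obtain ⟨c, hc⟩ := WithTop.ne_top_iff_exists.mp hfinb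
    rw [hgapdef] at h1
    simp only [← hc, WithTop.untopD_coe] at h1
    rw [← hc, WithTop.coe_lt_coe] at hviol
    rw [← hc, WithTop.coe_le_coe] at hlow
    linarith
  -- b reaches i
  have hEHbi : EH b i := (hsuppu.2 i b hbi).mp hfinb
  have hrbi : Reaches E b i := (hEH b i hEHbi).2
  -- point from source b
  set y : Fin n → ℝ :=
    fun v => if Reaches E b v then dd E (cw C) b v else M - W * rnk E v with hydef
  have hyC : y ∈ wdp C := ypt_mem hdag hsupp hW hW0 hM b
  have hyCu : y ∈ wdp Cu := by rw [hQ]; exact hyC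
  have hyb : y b = 0 := by
    rw [hydef]; simp only [if_pos (reaches_refl (E := E) b)]; exact dd_self hdag (cw C) b
  have hyi : y i = dd E (cw C) b i := by rw [hydef]; simp only [if_pos hrbi]
  have hstar : dd E (cw C) b i ≤ x i - x b := by
    have := hyCu i b hbi
    rw [hCub, WithTop.coe_le_coe] at this
    rw [hyi, hyb] at this
    linarith
  -- b is reachable from j
  have hrjb : Reaches E j b := by
    by_contra hnr
    have hxb : x b = M - W * rnk E b := by rw [hxdef]; simp only [if_neg hnr]
    have h1 : |dd E (cw C) b i| ≤ n * W := dd_abs_le hdag (cw C) hW hW0 hrbi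
    rw [abs_le] at h1
    have h2 : (rnk E b : ℝ) ≤ n := by exact_mod_cast rnk_le (E := E) b
    have h3 : |cw C j i| ≤ W := hW j i
    rw [abs_le] at h3
    have h4 : W * (rnk E b : ℝ) ≤ W * n := by nlinarith
    rw [hxb, hxi, hMdef] at hstar
    nlinarith [h1.1, h3.2]
  -- b must be j
  have hbj : b = j := by
    by_contra hbj
    have hxb : x b = dd E (cw C) j b := by rw [hxdef]; simp only [if_pos hrjb]
    obtain ⟨p, hp, hpw⟩ := dd_attained hdag (cw C) hrjb
    obtain ⟨q, hq, hqw⟩ := dd_attained hdag (cw C) hrbi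
    rcases q with _ | ⟨b2, qt⟩
    · exact absurd rfl (path_ne_nil hq)
    have hb2 : b2 = b := by have := hq.1; simpa using this
    rw [hb2] at hq hqw
    obtain ⟨hpp, hppw⟩ := path_concat (E := E) (cw C) qt b i p j hp hq
    have hbmem : b ∈ p ++ qt := by
      apply List.mem_append_left
      have : b ∈ p.getLast? := hp.2.1 ▸ rfl
      exact List.mem_of_mem_getLast? this
    have hppne : p ++ qt ≠ [j, i] := by
      intro h
      rw [h] at hbmem
      simp at hbmem
      rcases hbmem with h | h
      · exact hbj h
      · exact hbi h.symm
    have := hwtr.2 (p ++ qt) hpp hppne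
    rw [hppw, hpw, hqw] at this
    rw [hxb, hxi] at hstar
    linarith
  subst hbj
  have hCuij : Cu i b = C i b := by
    rw [hCub, hxi, hxj, coe_cw hCfin]
    norm_num
  exact ⟨hEHbi, hCuij⟩

end Lemmas6
/-- `Q(C) = Q(C^♭)`, and `(G^♭_w, w^♭)` is the unique minimal such
weighted DAG: any weighted DAG `(H, u)` with edges in `E*` and `Q(C_u) = Q(C)` contains
`G^♭_w` with the same weights there; and `w^♭` is the unique weight vector on `G^♭_w`
whose weighted digraph polyhedron is `Q(C^♭)`. -/
theorem stmt9 {n : ℕ} (E : Fin n → Fin n → Prop) (C : Matrix (Fin n) (Fin n) Trop)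
    (hdag : IsDAG E) (hsupp : SupportedOn C E) :
    wdp C = wdp (CflatM E C) ∧
    (∀ (EH : Fin n → Fin n → Prop) (Cu : Matrix (Fin n) (Fin n) Trop),
      (∀ a b, EH a b → EStar E a b) → SupportedOn Cu EH → wdp Cu = wdp C →
      ∀ j i, InWTR E (cw C) j i → EH j i ∧ Cu i j = C i j) ∧
    (∀ Cu : Matrix (Fin n) (Fin n) Trop,
      SupportedOn Cu (fun a b => InWTR E (cw C) a b) →
      wdp Cu = wdp (CflatM E C) → Cu = CflatM E C) := by
  have hpart1 := part1 (C := C) hdag hsupp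
  refine ⟨hpart1, ?_, ?_⟩
  · intro EH Cu hEH hsuppu hQ j i hwtr
    exact part2 hdag hsupp EH Cu hEH hsuppu hQ hwtr
  · intro Cu hsuppu hQ
    have hQ' : wdp Cu = wdp C := hQ.trans hpart1.symm
    have hEH : ∀ a b, InWTR E (cw C) a b → EStar E a b := by
      intro a b h
      exact ⟨edge_ne hdag h.1, [a, b], rfl, rfl, by simp [List.Chain', h.1]⟩
    funext a b
    by_cases hab : a = b
    · subst hab
      rw [hsuppu.1 a, CflatM]
      simp
    · by_cases hwtr : InWTR E (cw C) b a
      · have h2 := (part2 hdag hsupp _ Cu hEH hsuppu hQ' hwtr).2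
        rw [h2, CflatM]
        simp [hab, hwtr]
      · have hfin : Cu a b = ⊤ := by
          by_contra h
          exact hwtr ((hsuppu.2 a b hab).mp h)
        rw [hfin, CflatM]
        simp [hab, hwtr]
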